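/- arXiv:2309.09154 — 2 statements merged into one kernel-verified Lean document; each statement's English description precedes it below -/
import Mathlib

section
/- Let f be a piecewise contracting interval map on X satisfying the separation property and D ⊂ X̃. Let K be a non-periodic basic piece of the attractor Λ (i.e. an X̃-minimal Cantor set component of Λ), and let θ be the itinerary of a point x ∈ K ∩ X̃. Then for every n ≥ 1, the set 𝒜_n(K) of atoms of generation n that intersect K equals {A_{i_1…i_n} : i_1…i_n ∈ L_n(θ)}; in particular #𝒜_n(K) = p_θ(n). -/
open Set Filter Metric Topology

/-- A piecewise contracting interval map (PCIM) on the compact interval `X = [a,b]`: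
there are `N ≥ 1` pairwise disjoint nonempty open (relative to `X`) subintervals
whose closures cover `X`, and `f` contracts with rate `lam ∈ (0,1)` on each piece. -/
structure PCIM where
  a : ℝ
  b : ℝ
  hab : a < b
  N : ℕ
  hN : 1 ≤ N
  f : ℝ → ℝ
  lam : ℝ
  hlam₀ : 0 < lam
  hlam₁ : lam < 1
  piece : Fin N → Set ℝ
  piece_nonempty : ∀ i, (piece i).Nonempty
  piece_interval : ∀ i, ∃ c d : ℝ, piece i = Set.Ioo c d ∩ Set.Icc a b
  piece_disjoint : ∀ i j, i ≠ j → Disjoint (piece i) (piece j)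
  cover : Set.Icc a b = ⋃ i, closure (piece i)
  mapsTo : Set.MapsTo f (Set.Icc a b) (Set.Icc a b)
  contract : ∀ i, ∀ x ∈ piece i, ∀ y ∈ piece i, |f x - f y| ≤ lam * |x - y|

namespace PCIM

variable (P : PCIM)

/-- The underlying compact interval `X`. -/
def X : Set ℝ := Set.Icc P.a P.b

/-- `X* = ⋃ i, X_i`, the union of the contraction pieces. -/
def Xstar : Set ℝ := ⋃ i, P.piece i

/-- `Δ = X \ X*`, the set of boundaries of the contraction pieces. -/
def Delta : Set ℝ := P.X \ P.Xstar

/-- `X̃ = ⋂_{j ≥ 0} f⁻ʲ(X*)`, the points all of whose iterates are well defined. -/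
def Xtilde : Set ℝ := ⋂ j : ℕ, (P.f^[j]) ⁻¹' P.Xstar

/-- `D`: the set of one-sided limits of `f` at the points of `Δ`. -/
def D : Set ℝ :=
  {L | ∃ c ∈ P.Delta,
    ((𝓝[P.X ∩ Set.Iio c] c).NeBot ∧ Filter.Tendsto P.f (𝓝[P.X ∩ Set.Iio c] c) (𝓝 L)) ∨
    ((𝓝[P.X ∩ Set.Ioi c] c).NeBot ∧ Filter.Tendsto P.f (𝓝[P.X ∩ Set.Ioi c] c) (𝓝 L))}

/-- A set `A` is `f`-pseudo-invariant if for every `x ∈ A` at least one of the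
one-sided limits of `f` at `x` belongs to `A`. -/
def PseudoInvariant (A : Set ℝ) : Prop :=
  ∀ x ∈ A,
    (∃ L ∈ A, (𝓝[P.X ∩ Set.Iio x] x).NeBot ∧
      Filter.Tendsto P.f (𝓝[P.X ∩ Set.Iio x] x) (𝓝 L)) ∨
    (∃ L ∈ A, (𝓝[P.X ∩ Set.Ioi x] x).NeBot ∧
      Filter.Tendsto P.f (𝓝[P.X ∩ Set.Ioi x] x) (𝓝 L))

/-- `f` is piecewise monotonic: strictly monotone on each contraction piece. -/
def PiecewiseMonotonic : Prop :=
  ∀ i, StrictMonoOn P.f (P.piece i) ∨ StrictAntiOn P.f (P.piece i)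

/-- `f` satisfies the separation property: it is piecewise monotonic and the closures
of the images of distinct pieces are disjoint. -/
def SeparationProperty : Prop :=
  P.PiecewiseMonotonic ∧
    ∀ i j, i ≠ j → closure (P.f '' P.piece i) ∩ closure (P.f '' P.piece j) = ∅

/-- The iterates `Λ_n` defining the attractor: `Λ_0 = X`,
`Λ_{n+1} = cl (f (Λ_n \ Δ))`. -/
def LambdaIter : (P : PCIM) → ℕ → Set ℝ
  | Q, 0 => Q.X
  | Q, n + 1 => closure (Q.f '' (LambdaIter Q n \ Q.Delta))

/-- The attractor `Λ = ⋂_{n ≥ 1} Λ_n`. -/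
def Lambda : Set ℝ := ⋂ n : ℕ, P.LambdaIter (n + 1)

/-- The atom associated to the word `w = [i₁, …, iₙ]`:
`A_{i₁…iₙ} = F_{iₙ} ∘ ⋯ ∘ F_{i₁}(X)` where `F_i(A) = cl (f (A ∩ X_i))`. -/
def atomOf (w : List (Fin P.N)) : Set ℝ :=
  w.foldl (fun A i => closure (P.f '' (A ∩ P.piece i))) P.X

/-- `𝒜_n`: the set of (nonempty) atoms of generation `n`. -/
def atoms (n : ℕ) : Set (Set ℝ) :=
  {A | ∃ w : List (Fin P.N), w.length = n ∧ P.atomOf w = A ∧ A.Nonempty}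

/-- `θ` is the itinerary of `x`: `f^t(x) ∈ X_{θ_t}` for all `t`. -/
def IsItinerary (x : ℝ) (θ : ℕ → Fin P.N) : Prop :=
  ∀ t : ℕ, P.f^[t] x ∈ P.piece (θ t)

/-- The word `θ_t θ_{t+1} … θ_{t+n-1}` of length `n` of the sequence `θ`. -/
def word (θ : ℕ → Fin P.N) (t n : ℕ) : List (Fin P.N) :=
  (List.range n).map fun k => θ (t + k)

/-- `L_n(θ)`: the set of words of length `n` occurring in `θ`. -/
def lang (θ : ℕ → Fin P.N) (n : ℕ) : Set (List (Fin P.N)) :=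
  {w | ∃ t : ℕ, w = P.word θ t n}

/-- The complexity function `p_θ(n) = #L_n(θ)`. -/
noncomputable def complexity (θ : ℕ → Fin P.N) (n : ℕ) : ℕ := (P.lang θ n).ncard

/-- The forward orbit of `x` under `f`. -/
def orbit (x : ℝ) : Set ℝ := {y | ∃ k : ℕ, P.f^[k] x = y}

/-- The ω-limit set of `x` under `f`. -/
def omegaLimitSet (x : ℝ) : Set ℝ :=
  ⋂ n : ℕ, closure {y | ∃ m : ℕ, n ≤ m ∧ P.f^[m] x = y}

/-- A compact pseudo-invariant set `A` is `X̃`-minimal if the orbit of every point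
of `A ∩ X̃` is dense in `A`. -/
def XtildeMinimal (A : Set ℝ) : Prop :=
  IsCompact A ∧ P.PseudoInvariant A ∧ ∀ x ∈ A ∩ P.Xtilde, A ⊆ closure (P.orbit x)

/-- A periodic orbit contained in `X̃`. -/
def IsPeriodicOrbit (A : Set ℝ) : Prop :=
  ∃ x ∈ P.Xtilde, ∃ p : ℕ, 1 ≤ p ∧ P.f^[p] x = x ∧ A = P.orbit x

end PCIM

/-- A Cantor set: nonempty, compact, perfect and totally disconnected. -/
def IsCantorSet (A : Set ℝ) : Prop :=
  A.Nonempty ∧ IsCompact A ∧ Perfect A ∧ IsTotallyDisconnected A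



private lemma aux_order {f : ℝ → ℝ} {C : Set ℝ}
    (hC : ∀ x ∈ C, ∀ y ∈ C, ∀ z : ℝ, x < z → z < y → z ∈ C)
    (hf : StrictMonoOn f C ∨ StrictAntiOn f C)
    {p α β : ℝ} (hαβ : α < β) {s t : ℕ → ℝ}
    (hs : ∀ n, s n ∈ C) (ht : ∀ n, t n ∈ C)
    (hsα : Tendsto s atTop (𝓝 α)) (htβ : Tendsto t atTop (𝓝 β))
    (hfs : Tendsto (fun n => f (s n)) atTop (𝓝 p))
    (hft : Tendsto (fun n => f (t n)) atTop (𝓝 p)) : False := by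
  set m₁ : ℝ := α + (β - α) / 3 with hm₁
  set m₂ : ℝ := α + 2 * ((β - α) / 3) with hm₂
  have h1 : α < m₁ := by simp [hm₁]; linarith
  have h12 : m₁ < m₂ := by rw [hm₁, hm₂]; linarith
  have h2 : m₂ < β := by rw [hm₂]; linarith
  have hsev : ∀ᶠ n in atTop, s n < m₁ := hsα.eventually_lt_const h1
  have htev : ∀ᶠ n in atTop, m₂ < t n := htβ.eventually_const_lt h2
  obtain ⟨N, hN1, hN2⟩ := (hsev.and htev).exists
  have hm₁C : m₁ ∈ C := hC _ (hs N) _ (ht N) _ hN1 (lt_trans h12 hN2)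
  have hm₂C : m₂ ∈ C := hC _ (hs N) _ (ht N) _ (lt_trans hN1 h12) hN2
  rcases hf with hf | hf
  · have hle : p ≤ f m₁ := le_of_tendsto hfs (hsev.mono fun n hn => (hf (hs n) hm₁C hn).le)
    have hge : f m₂ ≤ p := ge_of_tendsto hft (htev.mono fun n hn => (hf hm₂C (ht n) hn).le)
    exact absurd (hf hm₁C hm₂C h12) (by linarith)
  · have hle : f m₁ ≤ p := ge_of_tendsto hfs (hsev.mono fun n hn => (hf (hs n) hm₁C hn).le)
    have hge : p ≤ f m₂ := le_of_tendsto hft (htev.mono fun n hn => (hf hm₂C (ht n) hn).le)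
    exact absurd (hf hm₁C hm₂C h12) (by linarith)

lemma disj_closure_image {f : ℝ → ℝ} {C S T : Set ℝ}
    (hC : ∀ x ∈ C, ∀ y ∈ C, ∀ z : ℝ, x < z → z < y → z ∈ C)
    (hf : StrictMonoOn f C ∨ StrictAntiOn f C)
    (hS : IsCompact S) (hT : IsCompact T) (hST : Disjoint S T) :
    Disjoint (closure (f '' (S ∩ C))) (closure (f '' (T ∩ C))) := by
  rw [Set.disjoint_left]
  rintro p hpS hpT
  obtain ⟨u, hu, hul⟩ := mem_closure_iff_seq_limit.1 hpS
  obtain ⟨v, hv, hvl⟩ := mem_closure_iff_seq_limit.1 hpT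
  choose s hsS hsC hsf using fun n => ((hu n).imp fun y hy => ⟨hy.1.1, hy.1.2, hy.2⟩ :
    ∃ y, y ∈ S ∧ y ∈ C ∧ f y = u n)
  choose r hrT hrC hrf using fun n => ((hv n).imp fun y hy => ⟨hy.1.1, hy.1.2, hy.2⟩ :
    ∃ y, y ∈ T ∧ y ∈ C ∧ f y = v n)
  obtain ⟨α, hαS, φ, hφ, hφl⟩ := hS.tendsto_subseq hsS
  obtain ⟨β, hβT, ψ, hψ, hψl⟩ := hT.tendsto_subseq hrT
  have hfs : Tendsto (fun n => f (s (φ n))) atTop (𝓝 p) := by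
    have : (fun n => f (s (φ n))) = u ∘ φ := funext fun n => hsf (φ n)
    rw [this]; exact hul.comp hφ.tendsto_atTop
  have hft : Tendsto (fun n => f (r (ψ n))) atTop (𝓝 p) := by
    have : (fun n => f (r (ψ n))) = v ∘ ψ := funext fun n => hrf (ψ n)
    rw [this]; exact hvl.comp hψ.tendsto_atTop
  have hne : α ≠ β := fun h => (Set.disjoint_left.1 hST hαS) (h ▸ hβT)
  rcases hne.lt_or_gt with h | h
  · exact aux_order hC hf h (fun n => hsC (φ n)) (fun n => hrC (ψ n)) hφl hψl hfs hft
  · exact aux_order hC hf h (fun n => hrC (ψ n)) (fun n => hsC (φ n)) hψl hφl hft hfs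

namespace PCIM
variable (P : PCIM)

lemma X_closed : IsClosed P.X := isClosed_Icc
lemma X_compact : IsCompact P.X := isCompact_Icc

lemma piece_subset_X (i : Fin P.N) : P.piece i ⊆ P.X := by
  obtain ⟨c, d, h⟩ := P.piece_interval i
  rw [h]; exact inter_subset_right

lemma piece_between (i : Fin P.N) {x y z : ℝ} (hx : x ∈ P.piece i) (hy : y ∈ P.piece i)
    (h1 : x < z) (h2 : z < y) : z ∈ P.piece i := by
  obtain ⟨c, d, h⟩ := P.piece_interval i
  rw [h] at hx hy ⊢
  exact ⟨⟨lt_trans hx.1.1 h1, lt_trans h2 hy.1.2⟩, le_trans hx.2.1 h1.le, le_trans h2.le hy.2.2⟩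

lemma F_subset_X (A : Set ℝ) (i : Fin P.N) :
    closure (P.f '' (A ∩ P.piece i)) ⊆ P.X := by
  refine closure_minimal ?_ P.X_closed
  rintro y ⟨z, hz, rfl⟩
  exact P.mapsTo (P.piece_subset_X i hz.2)

lemma foldl_subset_X (w : List (Fin P.N)) (A : Set ℝ) (hA : A ⊆ P.X) :
    w.foldl (fun A i => closure (P.f '' (A ∩ P.piece i))) A ⊆ P.X := by
  induction w generalizing A with
  | nil => exact hA
  | cons i w ih => exact ih _ (P.F_subset_X A i)

lemma atom_subset_X (w : List (Fin P.N)) : P.atomOf w ⊆ P.X :=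
  P.foldl_subset_X w P.X le_rfl

lemma foldl_closed (w : List (Fin P.N)) (A : Set ℝ) (hA : IsClosed A) :
    IsClosed (w.foldl (fun A i => closure (P.f '' (A ∩ P.piece i))) A) := by
  induction w generalizing A with
  | nil => exact hA
  | cons i w ih => exact ih _ isClosed_closure

lemma atom_closed (w : List (Fin P.N)) : IsClosed (P.atomOf w) :=
  P.foldl_closed w P.X P.X_closed

lemma atom_compact (w : List (Fin P.N)) : IsCompact (P.atomOf w) :=
  P.X_compact.of_isClosed_subset (P.atom_closed w) (P.atom_subset_X w)

lemma atom_concat (w : List (Fin P.N)) (i : Fin P.N) :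
    P.atomOf (w ++ [i]) = closure (P.f '' (P.atomOf w ∩ P.piece i)) :=
  List.foldl_concat _ _ _ _

lemma atom_last_subset (w : List (Fin P.N)) (i : Fin P.N) :
    P.atomOf (w ++ [i]) ⊆ closure (P.f '' (P.piece i)) := by
  rw [P.atom_concat]
  exact closure_mono (Set.image_mono inter_subset_right)

/-- Distinct words of the same length have disjoint atoms (separation property). -/
lemma atoms_disjoint (hsep : P.SeparationProperty) :
    ∀ n : ℕ, ∀ w w' : List (Fin P.N), w.length = n → w'.length = n → w ≠ w' →
      Disjoint (P.atomOf w) (P.atomOf w') := by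
  intro n
  induction n with
  | zero =>
    intro w w' hw hw' hne
    exact absurd ((List.length_eq_zero_iff.1 hw).trans (List.length_eq_zero_iff.1 hw').symm) hne
  | succ n ih =>
    intro w w' hw hw' hne
    obtain ⟨u, i, rfl⟩ : ∃ u i, w = u ++ [i] := by
      rcases List.eq_nil_or_concat w with h | ⟨u, i, h⟩
      · simp [h] at hw
      · exact ⟨u, i, by simpa using h⟩
    obtain ⟨u', j, rfl⟩ : ∃ u j, w' = u ++ [j] := by
      rcases List.eq_nil_or_concat w' with h | ⟨u, j, h⟩
      · simp [h] at hw'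
      · exact ⟨u, j, by simpa using h⟩
    rcases eq_or_ne i j with rfl | hij
    · have hu : u ≠ u' := fun h => hne (by rw [h])
      have hlu : u.length = n := by simpa using hw
      have hlu' : u'.length = n := by simpa using hw'
      have hdisj := ih u u' hlu hlu' hu
      rw [P.atom_concat, P.atom_concat]
      exact disj_closure_image (fun x hx y hy z h1 h2 => P.piece_between i hx hy h1 h2)
        (hsep.1 i) (P.atom_compact u) (P.atom_compact u') hdisj
    · have h := hsep.2 i j hij
      exact Set.disjoint_of_subset (P.atom_last_subset u i) (P.atom_last_subset u' j)
        (by rw [Set.disjoint_iff_inter_eq_empty]; exact h)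

lemma word_length (θ : ℕ → Fin P.N) (t n : ℕ) : (P.word θ t n).length = n := by
  simp [PCIM.word]

lemma word_cons (θ : ℕ → Fin P.N) (t n : ℕ) :
    P.word θ t (n + 1) = θ t :: P.word θ (t + 1) n := by
  have harg : ∀ k, θ (t + Nat.succ k) = θ (t + 1 + k) := fun k => congrArg θ (by omega)
  simp [PCIM.word, List.range_succ_eq_map, List.map_map, Function.comp_def, harg]

lemma word_mem_lang (θ : ℕ → Fin P.N) (t n : ℕ) : P.word θ t n ∈ P.lang θ n := ⟨t, rfl⟩

lemma mem_lang_length {θ : ℕ → Fin P.N} {n : ℕ} {w : List (Fin P.N)}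
    (h : w ∈ P.lang θ n) : w.length = n := by
  obtain ⟨t, rfl⟩ := h; exact P.word_length θ t n

lemma orbit_mem_X {x : ℝ} (hx : x ∈ P.X) (t : ℕ) : P.f^[t] x ∈ P.X := by
  induction t with
  | zero => simpa using hx
  | succ t ih => rw [Function.iterate_succ_apply']; exact P.mapsTo ih

/-- The orbit point `f^[t+n] x` belongs to the atom of the word `θ_t … θ_{t+n-1}`. -/
lemma orbit_mem_word_atom {x : ℝ} {θ : ℕ → Fin P.N} (hθ : P.IsItinerary x θ) (hx : x ∈ P.X) :
    ∀ n t : ℕ, P.f^[t + n] x ∈ P.atomOf (P.word θ t n) := by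
  have key : ∀ n t (A : Set ℝ), P.f^[t] x ∈ A →
      P.f^[t + n] x ∈ (P.word θ t n).foldl (fun A i => closure (P.f '' (A ∩ P.piece i))) A := by
    intro n
    induction n with
    | zero => intro t A hA; simpa [PCIM.word] using hA
    | succ n ih =>
      intro t A hA
      rw [P.word_cons]
      simp only [List.foldl_cons]
      have h1 : P.f^[t + 1] x ∈ closure (P.f '' (A ∩ P.piece (θ t))) := by
        rw [Function.iterate_succ_apply' P.f t x]
        exact subset_closure ⟨P.f^[t] x, ⟨hA, hθ t⟩, rfl⟩
      have := ih (t + 1) _ h1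
      have harith : t + 1 + n = t + (n + 1) := by ring
      rwa [harith] at this
  intro n t
  exact key n t P.X (P.orbit_mem_X hx t)

lemma Xstar_subset_X : P.Xstar ⊆ P.X :=
  Set.iUnion_subset fun i => P.piece_subset_X i

/-- `f` is continuous on each piece. -/
lemma continuousOn_piece (i : Fin P.N) : ContinuousOn P.f (P.piece i) := by
  have : LipschitzOnWith (Real.toNNReal P.lam) P.f (P.piece i) := by
    intro u hu v hv
    rw [edist_dist, edist_dist, Real.dist_eq, Real.dist_eq]
    calc ENNReal.ofReal |P.f u - P.f v| ≤ ENNReal.ofReal (P.lam * |u - v|) :=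
          ENNReal.ofReal_le_ofReal (P.contract i u hu v hv)
      _ = ENNReal.ofReal P.lam * ENNReal.ofReal |u - v| :=
          ENNReal.ofReal_mul P.hlam₀.le
      _ = (Real.toNNReal P.lam : ENNReal) * ENNReal.ofReal |u - v| := by
          rw [ENNReal.ofReal]
  exact this.continuousOn

/-- At a point of a piece, `f` tends to `f y` along any subfilter within `X`. -/
lemma tendsto_of_mem_piece {y : ℝ} {i : Fin P.N} (hy : y ∈ P.piece i) (s : Set ℝ)
    (hs : s ⊆ P.X) : Tendsto P.f (𝓝[s] y) (𝓝 (P.f y)) := by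
  obtain ⟨c, d, hpiece⟩ := P.piece_interval i
  have hyIoo : y ∈ Set.Ioo c d := by rw [hpiece] at hy; exact hy.1
  have hIoo : Set.Ioo c d ∈ 𝓝 y := isOpen_Ioo.mem_nhds hyIoo
  have hsub : s ∩ Set.Ioo c d ⊆ P.piece i := by
    rw [hpiece]; exact fun z hz => ⟨hz.2, hs hz.1⟩
  have h1 : 𝓝[s] y = 𝓝[s ∩ Set.Ioo c d] y :=
    (nhdsWithin_inter_of_mem' (mem_nhdsWithin_of_mem_nhds hIoo)).symm
  rw [h1]
  exact (P.continuousOn_piece i y hy).mono hsub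

lemma mem_Xstar_of_Xtilde {y : ℝ} (hy : y ∈ P.Xtilde) : y ∈ P.Xstar := by
  have := Set.mem_iInter.1 hy 0
  simpa using this

lemma Xtilde_invariant {y : ℝ} (hy : y ∈ P.Xtilde) : P.f y ∈ P.Xtilde := by
  rw [PCIM.Xtilde, Set.mem_iInter] at hy ⊢
  intro j
  have := hy (j + 1)
  simpa [Function.iterate_succ_apply] using this

lemma step_in_K {K : Set ℝ} (hKpi : P.PseudoInvariant K) {y : ℝ}
    (hyK : y ∈ K) (hyXt : y ∈ P.Xtilde) : P.f y ∈ K := by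
  obtain ⟨i, hyi⟩ := Set.mem_iUnion.1 (P.mem_Xstar_of_Xtilde hyXt)
  rcases hKpi y hyK with ⟨L, hLK, hne, htend⟩ | ⟨L, hLK, hne, htend⟩
  · haveI := hne
    have h2 : Tendsto P.f (𝓝[P.X ∩ Set.Iio y] y) (𝓝 (P.f y)) :=
      P.tendsto_of_mem_piece hyi _ inter_subset_left
    rwa [tendsto_nhds_unique h2 htend]
  · haveI := hne
    have h2 : Tendsto P.f (𝓝[P.X ∩ Set.Ioi y] y) (𝓝 (P.f y)) :=
      P.tendsto_of_mem_piece hyi _ inter_subset_left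
    rwa [tendsto_nhds_unique h2 htend]

lemma orbit_in_K {K : Set ℝ} (hKpi : P.PseudoInvariant K) {x : ℝ}
    (hx : x ∈ K ∩ P.Xtilde) : ∀ k : ℕ, P.f^[k] x ∈ K ∩ P.Xtilde := by
  intro k
  induction k with
  | zero => simpa using hx
  | succ k ih =>
    rw [Function.iterate_succ_apply']
    exact ⟨P.step_in_K hKpi ih.1 ih.2, P.Xtilde_invariant ih.2⟩

lemma lang_finite (θ : ℕ → Fin P.N) (n : ℕ) : (P.lang θ n).Finite :=
  (List.finite_length_eq (Fin P.N) n).subset fun _ hw => P.mem_lang_length hw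

end PCIM

/-- In a perfect set, every point is in the closure of the set minus any finite set. -/
lemma perfect_mem_closure_diff {K G : Set ℝ} (hK : Perfect K) (hG : G.Finite)
    {y : ℝ} (hy : y ∈ K) : y ∈ closure (K \ (G ∪ {y})) := by
  have hacc : ClusterPt y (𝓟 (K \ {y})) := accPt_principal_iff_clusterPt.1 (hK.acc y hy)
  have h1 : (𝓝[K \ {y}] y).NeBot := hacc
  have hGc : IsClosed (G \ {y}) := (hG.subset diff_subset).isClosed
  have hGmem : (G \ {y})ᶜ ∈ 𝓝 y := hGc.isOpen_compl.mem_nhds (by simp)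
  have h2 : 𝓝[(K \ {y}) ∩ (G \ {y})ᶜ] y = 𝓝[K \ {y}] y := by
    rw [nhdsWithin_inter']
    exact inf_eq_left.mpr (le_principal_iff.mpr (mem_nhdsWithin_of_mem_nhds hGmem))
  have h3 : (𝓝[(K \ {y}) ∩ (G \ {y})ᶜ] y).NeBot := by rw [h2]; exact h1
  have hsub : (K \ {y}) ∩ (G \ {y})ᶜ ⊆ K \ (G ∪ {y}) := by
    rintro z ⟨⟨hzK, hzy⟩, hzG⟩
    refine ⟨hzK, ?_⟩
    simp only [Set.mem_union, Set.mem_singleton_iff] at *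
    rintro (hzG' | rfl)
    · exact hzG ⟨hzG', hzy⟩
    · exact hzy rfl
  exact closure_mono hsub (mem_closure_iff_nhdsWithin_neBot.2 h3)
/-- Under the separation property and `D ⊆ X̃`, if `K` is a
non-periodic basic piece of `Λ` (an `X̃`-minimal Cantor set component of `Λ`)
and `θ` is the itinerary of a point `x ∈ K ∩ X̃`, then for every `n ≥ 1` the
atoms of generation `n` meeting `K` are exactly the atoms of the words of
`L_n(θ)`; in particular their number is `p_θ(n)`. -/
theorem atoms_meeting_basic_piece (P : PCIM)
    (hsep : P.SeparationProperty) (hD : P.D ⊆ P.Xtilde)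
    (K : Set ℝ) (hKΛ : K ⊆ P.Lambda)
    (hKmin : P.XtildeMinimal K) (hKC : IsCantorSet K)
    (x : ℝ) (hx : x ∈ K ∩ P.Xtilde) (θ : ℕ → Fin P.N) (hθ : P.IsItinerary x θ) :
    ∀ n : ℕ, 1 ≤ n →
      {A ∈ P.atoms n | (A ∩ K).Nonempty} =
        {A : Set ℝ | ∃ w ∈ P.lang θ n, A = P.atomOf w} ∧
      {A ∈ P.atoms n | (A ∩ K).Nonempty}.ncard = P.complexity θ n := by

  have hxX : x ∈ P.X := P.Xstar_subset_X (P.mem_Xstar_of_Xtilde hx.2)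
  have horb : ∀ k : ℕ, P.f^[k] x ∈ K ∩ P.Xtilde := P.orbit_in_K hKmin.2.1 hx
  intro n hn
  -- every atom of a word of the language is an atom of generation n meeting K
  have hwordatom : ∀ t : ℕ, P.f^[t + n] x ∈ P.atomOf (P.word θ t n) ∩ K :=
    fun t => ⟨P.orbit_mem_word_atom hθ hxX n t, (horb (t + n)).1⟩
  have hseteq : {A ∈ P.atoms n | (A ∩ K).Nonempty} =
      {A : Set ℝ | ∃ w ∈ P.lang θ n, A = P.atomOf w} := by
    ext A
    constructor
    · rintro ⟨⟨w, hwlen, rfl, hAne⟩, y, hyA, hyK⟩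
      -- `y ∈ K` lies in some atom of a word of the language
      set T : Set ℝ := {z | ∃ m : ℕ, n ≤ m ∧ P.f^[m] x = z} with hT
      set G : Set ℝ := (fun m => P.f^[m] x) '' {m : ℕ | m < n} with hG
      have hGfin : G.Finite := (Set.finite_Iio n).image _
      have horbsub : P.orbit x ⊆ G ∪ T := by
        rintro z ⟨k, rfl⟩
        rcases lt_or_ge k n with h | h
        · exact Or.inl ⟨k, h, rfl⟩
        · exact Or.inr ⟨k, h, rfl⟩
      have hclorb : closure (P.orbit x) ⊆ G ∪ closure T := by
        have : closure (P.orbit x) ⊆ closure (G ∪ T) := closure_mono horbsub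
        rwa [closure_union, hGfin.isClosed.closure_eq] at this
      have hKsub : K \ (G ∪ {y}) ⊆ closure T := by
        rintro z ⟨hzK, hz⟩
        rcases hclorb (hKmin.2.2 x hx hzK) with h | h
        · exact absurd (Or.inl h) hz
        · exact h
      have hyT : y ∈ closure T := by
        have h1 := closure_mono hKsub (perfect_mem_closure_diff hKC.2.2.1 hGfin hyK)
        rwa [closure_closure] at h1
      -- T is contained in the closed finite union of language atoms
      have hTsub : T ⊆ ⋃ w' ∈ P.lang θ n, P.atomOf w' := by
        rintro z ⟨m, hm, rfl⟩
        have : P.f^[(m - n) + n] x ∈ P.atomOf (P.word θ (m - n) n) ∩ K :=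
          hwordatom (m - n)
        rw [Nat.sub_add_cancel hm] at this
        exact Set.mem_biUnion (P.word_mem_lang θ (m - n) n) this.1
      have hUclosed : IsClosed (⋃ w' ∈ P.lang θ n, P.atomOf w') :=
        (P.lang_finite θ n).isClosed_biUnion fun w' _ => P.atom_closed w'
      have hyU : y ∈ ⋃ w' ∈ P.lang θ n, P.atomOf w' :=
        hUclosed.closure_subset_iff.2 hTsub hyT
      obtain ⟨w'', hw''lang, hyw''⟩ := Set.mem_iUnion₂.1 hyU
      rcases eq_or_ne w w'' with rfl | hne
      · exact ⟨w, hw''lang, rfl⟩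
      · exact absurd hyw'' (Set.disjoint_left.1
          (P.atoms_disjoint hsep n w w'' hwlen (P.mem_lang_length hw''lang) hne) hyA)
    · rintro ⟨w, hwlang, rfl⟩
      obtain ⟨t, rfl⟩ := hwlang
      refine ⟨⟨P.word θ t n, P.word_length θ t n, rfl, ⟨_, (hwordatom t).1⟩⟩, _, (hwordatom t).1, (hwordatom t).2⟩
  refine ⟨hseteq, ?_⟩
  rw [hseteq]
  have him : {A : Set ℝ | ∃ w ∈ P.lang θ n, A = P.atomOf w} = P.atomOf '' P.lang θ n := by
    ext A; simp [eq_comm]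
  rw [him, Set.ncard_image_of_injOn, PCIM.complexity]
  intro w hw w' hw' heq
  by_contra hne
  have hdisj := P.atoms_disjoint hsep n w w' (P.mem_lang_length hw) (P.mem_lang_length hw') hne
  rw [heq] at hdisj
  obtain ⟨t, rfl⟩ := hw'
  exact Set.disjoint_left.1 hdisj (hwordatom t).1 (hwordatom t).1
end

section
/- Let f be a piecewise contracting interval map on X with N contraction pieces, satisfying the separation property and D ⊂ X̃. Let n₀ ≥ 1 be such that every atom of generation n₀ or higher contains at most one point of Δ. Then for every n ≥ 1, #𝒜_{n+n₀} − #𝒜_{n₀} ≤ n(N−1). -/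
open Set Filter Metric Topology

namespace PCIMAux
open PCIM
variable (P : PCIM)

/-- one application of `F_i`. -/
def stepF (A : Set ℝ) (i : Fin P.N) : Set ℝ := closure (P.f '' (A ∩ P.piece i))

lemma atomOf_append (w : List (Fin P.N)) (i : Fin P.N) :
    P.atomOf (w ++ [i]) = stepF P (P.atomOf w) i := by
  simp [PCIM.atomOf, List.foldl_append, stepF]

lemma piece_subset (i : Fin P.N) : P.piece i ⊆ P.X := by
  obtain ⟨c, d, h⟩ := P.piece_interval i
  rw [h]; exact inter_subset_right

lemma piece_ordConnected (i : Fin P.N) : (P.piece i).OrdConnected := by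
  obtain ⟨c, d, h⟩ := P.piece_interval i
  rw [h]; exact Set.ordConnected_Ioo.inter Set.ordConnected_Icc

lemma continuousOn_piece (i : Fin P.N) : ContinuousOn P.f (P.piece i) := by
  refine (LipschitzOnWith.of_dist_le_mul (K := P.lam.toNNReal) ?_).continuousOn
  intro x hx y hy
  rw [Real.dist_eq, Real.dist_eq, Real.coe_toNNReal _ P.hlam₀.le]
  exact P.contract i x hx y hy

lemma foldl_inv {Q : Set ℝ → Prop} (h0 : Q P.X)
    (hstep : ∀ A i, Q A → Q (stepF P A i)) (w : List (Fin P.N)) : Q (P.atomOf w) := by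
  suffices H : ∀ (w : List (Fin P.N)) (A : Set ℝ), Q A →
      Q (w.foldl (fun A i => closure (P.f '' (A ∩ P.piece i))) A) from H w P.X h0
  intro w
  induction w with
  | nil => intro A h; exact h
  | cons i w ih => intro A h; exact ih _ (hstep A i h)

lemma atom_subset_X (w : List (Fin P.N)) : P.atomOf w ⊆ P.X := by
  refine foldl_inv P (Q := fun A => A ⊆ P.X) subset_rfl (fun A i hA => ?_) w
  refine closure_minimal ?_ isClosed_Icc
  rintro _ ⟨x, hx, rfl⟩
  exact P.mapsTo (piece_subset P i hx.2)

lemma atom_ordConnected (w : List (Fin P.N)) : (P.atomOf w).OrdConnected := by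
  refine foldl_inv P Set.ordConnected_Icc (fun A i hA => ?_) w
  exact (((hA.inter (piece_ordConnected P i)).isPreconnected.image P.f
    ((continuousOn_piece P i).mono inter_subset_right)).closure).ordConnected

lemma atom_isCompact (w : List (Fin P.N)) : IsCompact (P.atomOf w) := by
  rcases List.eq_nil_or_concat w with rfl | ⟨w₀, i, rfl⟩
  · exact isCompact_Icc
  · rw [List.concat_eq_append, atomOf_append]
    have := atom_subset_X P (w₀ ++ [i])
    rw [atomOf_append] at this
    exact IsCompact.of_isClosed_subset isCompact_Icc isClosed_closure this

/-- The core contradiction: two sequences in `T` whose images converge to the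
same point, but the limits of the sequences are distinct. -/
lemma core {T : Set ℝ} (hT : T.OrdConnected)
    (hmono : StrictMonoOn P.f T ∨ StrictAntiOn P.f T)
    {x y z : ℝ} (hxy : x < y)
    {s t : ℕ → ℝ} (hs : ∀ n, s n ∈ T) (ht : ∀ n, t n ∈ T)
    (hsx : Tendsto s atTop (𝓝 x)) (hty : Tendsto t atTop (𝓝 y))
    (hfs : Tendsto (fun n => P.f (s n)) atTop (𝓝 z))
    (hft : Tendsto (fun n => P.f (t n)) atTop (𝓝 z)) : False := by
  have hclT : (closure T).OrdConnected :=
    (hT.isPreconnected.closure).ordConnected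
  have hxT : x ∈ closure T := mem_closure_of_tendsto hsx (Eventually.of_forall hs)
  have hyT : y ∈ closure T := mem_closure_of_tendsto hty (Eventually.of_forall ht)
  set m2 : ℝ := x + 2 * (y - x) / 3 with hm2
  have hm1T : x + (y - x) / 3 ∈ closure T := hclT.out hxT hyT ⟨by linarith, by linarith⟩
  obtain ⟨u, huo, huT⟩ := mem_closure_iff.mp hm1T (Ioo x m2) isOpen_Ioo
    ⟨by simp [hm2]; linarith, by simp [hm2]; linarith⟩
  have hm3T : (m2 + y) / 2 ∈ closure T := hclT.out hxT hyT ⟨by simp [hm2]; linarith, by simp [hm2]; linarith⟩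
  obtain ⟨v, hvo, hvT⟩ := mem_closure_iff.mp hm3T (Ioo m2 y) isOpen_Ioo
    ⟨by simp [hm2]; linarith, by simp [hm2]; linarith⟩
  have huv : u < v := lt_trans huo.2 hvo.1
  have hsu : ∀ᶠ n in atTop, s n < u := hsx.eventually_lt_const huo.1
  have htv : ∀ᶠ n in atTop, v < t n := hty.eventually_const_lt hvo.2
  rcases hmono with hm | hm
  · have h1 : z ≤ P.f u := le_of_tendsto hfs (hsu.mono fun n h => (hm (hs n) huT h).le)
    have h2 : P.f v ≤ z := ge_of_tendsto hft (htv.mono fun n h => (hm hvT (ht n) h).le)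
    have h3 : P.f u < P.f v := hm huT hvT huv
    linarith
  · have h1 : P.f u ≤ z := ge_of_tendsto hfs (hsu.mono fun n h => (hm (hs n) huT h).le)
    have h2 : z ≤ P.f v := le_of_tendsto hft (htv.mono fun n h => (hm hvT (ht n) h).le)
    have h3 : P.f v < P.f u := hm huT hvT huv
    linarith

/-- extract a convergent subsequence realizing a closure point of an image set. -/
lemma extract {B : Set ℝ} (hB : IsCompact B) (i : Fin P.N) {z : ℝ}
    (hz : z ∈ stepF P B i) :
    ∃ x ∈ B, ∃ s : ℕ → ℝ, (∀ n, s n ∈ B ∩ P.piece i) ∧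
      Tendsto s atTop (𝓝 x) ∧ Tendsto (fun n => P.f (s n)) atTop (𝓝 z) := by
  obtain ⟨p, hp, hpz⟩ := mem_closure_iff_seq_limit.mp hz
  choose s hsmem hfs using hp
  obtain ⟨x, hxB, φ, hφ, hsx⟩ := hB.tendsto_subseq (fun n => (hsmem n).1)
  refine ⟨x, hxB, s ∘ φ, fun n => hsmem (φ n), hsx, ?_⟩
  have : (fun n => P.f ((s ∘ φ) n)) = p ∘ φ := by
    funext n; exact hfs (φ n)
  rw [this]
  exact hpz.comp hφ.tendsto_atTop

lemma stepF_disjoint (hsep : P.SeparationProperty) {B B' : Set ℝ}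
    (hB : IsCompact B) (hB' : IsCompact B') (hd : Disjoint B B') (i : Fin P.N) :
    Disjoint (stepF P B i) (stepF P B' i) := by
  by_contra h
  obtain ⟨z, hz, hz'⟩ := Set.not_disjoint_iff.mp h
  obtain ⟨x, hxB, s, hs, hsx, hfs⟩ := extract P hB i hz
  obtain ⟨y, hyB, t, ht, hty, hft⟩ := extract P hB' i hz'
  have hxy : x ≠ y := fun e => Set.disjoint_left.mp hd hxB (e ▸ hyB)
  rcases hxy.lt_or_gt with hlt | hlt
  · exact core P (piece_ordConnected P i) (hsep.1 i) hlt
      (fun n => (hs n).2) (fun n => (ht n).2) hsx hty hfs hft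
  · exact core P (piece_ordConnected P i) (hsep.1 i) hlt
      (fun n => (ht n).2) (fun n => (hs n).2) hty hsx hft hfs

lemma stepF_subset_closure_image (A : Set ℝ) (i : Fin P.N) :
    stepF P A i ⊆ closure (P.f '' P.piece i) :=
  closure_mono (image_mono inter_subset_right)

lemma atom_eq_or_disjoint (hsep : P.SeparationProperty) :
    ∀ w w' : List (Fin P.N), w.length = w'.length →
      P.atomOf w = P.atomOf w' ∨ Disjoint (P.atomOf w) (P.atomOf w') := by
  intro w
  induction w using List.reverseRecOn with
  | nil =>
    intro w' hlen
    left
    have : w' = [] := List.eq_nil_of_length_eq_zero hlen.symm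
    rw [this]
  | append_singleton w i ih =>
    intro w' hlen
    rcases List.eq_nil_or_concat w' with rfl | ⟨w₀, j, rfl⟩
    · simp at hlen
    · rw [List.concat_eq_append] at hlen ⊢
      simp only [List.length_append, List.length_singleton] at hlen
      by_cases hij : i = j
      · subst hij
        rcases ih w₀ (by omega) with heq | hdisj
        · left; rw [atomOf_append, atomOf_append, heq]
        · right
          rw [atomOf_append, atomOf_append]
          exact stepF_disjoint P hsep (atom_isCompact P w) (atom_isCompact P w₀) hdisj i
      · right
        rw [atomOf_append, atomOf_append]
        refine Set.disjoint_of_subset (stepF_subset_closure_image P _ i)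
          (stepF_subset_closure_image P _ j) ?_
        rw [Set.disjoint_iff_inter_eq_empty]
        exact hsep.2 i j hij

lemma atoms_eq_or_disjoint (hsep : P.SeparationProperty) {n : ℕ} {A A' : Set ℝ}
    (hA : A ∈ P.atoms n) (hA' : A' ∈ P.atoms n) : A = A' ∨ Disjoint A A' := by
  obtain ⟨w, hw, rfl, -⟩ := hA
  obtain ⟨w', hw', rfl, -⟩ := hA'
  exact atom_eq_or_disjoint P hsep w w' (hw.trans hw'.symm)

end PCIMAux

namespace PCIMAux
open PCIM
variable (P : PCIM)

/-- Between points of two different pieces there is a point of `Δ`. -/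
lemma exists_delta_between {u v : ℝ} {i j : Fin P.N} (hij : i ≠ j)
    (hu : u ∈ P.piece i) (hv : v ∈ P.piece j) (huv : u < v) :
    ∃ δ, δ ∈ P.Delta ∧ u < δ ∧ δ < v := by
  by_contra h
  push_neg at h
  have hXsub : Set.Icc u v ⊆ P.X :=
    Set.ordConnected_Icc.out (piece_subset P i hu) (piece_subset P j hv)
  have hXs : ∀ x ∈ Set.Icc u v, x ∈ P.Xstar := by
    intro x hx
    by_contra hxs
    have hxD : x ∈ P.Delta := ⟨hXsub hx, hxs⟩
    have hne1 : x ≠ u := by rintro rfl; exact hxs (Set.mem_iUnion.mpr ⟨i, hu⟩)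
    have hne2 : x ≠ v := by rintro rfl; exact hxs (Set.mem_iUnion.mpr ⟨j, hv⟩)
    have h1 : u < x := lt_of_le_of_ne hx.1 (Ne.symm hne1)
    have h2 : v ≤ x := h x hxD h1
    exact hne2 (le_antisymm hx.2 h2)
  choose c d hcd using P.piece_interval
  set U : Set ℝ := Set.Ioo (c i) (d i) with hU
  set V : Set ℝ := ⋃ k ∈ {k : Fin P.N | k ≠ i}, Set.Ioo (c k) (d k) with hV
  have hUopen : IsOpen U := isOpen_Ioo
  have hVopen : IsOpen V := isOpen_biUnion (fun k _ => isOpen_Ioo)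
  have hmemIoo : ∀ (k : Fin P.N) (x : ℝ), x ∈ P.piece k → x ∈ Set.Ioo (c k) (d k) := by
    intro k x hx; rw [hcd k] at hx; exact hx.1
  have hIooX : ∀ (k : Fin P.N) (x : ℝ), x ∈ Set.Ioo (c k) (d k) → x ∈ P.X → x ∈ P.piece k := by
    intro k x hx hxX; rw [hcd k]; exact ⟨hx, hxX⟩
  have hcover : Set.Icc u v ⊆ U ∪ V := by
    intro x hx
    obtain ⟨k, hk⟩ := Set.mem_iUnion.mp (hXs x hx)
    by_cases hki : k = i
    · subst hki; exact Or.inl (hmemIoo k x hk)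
    · exact Or.inr (Set.mem_biUnion hki (hmemIoo k x hk))
  have hne1 : (Set.Icc u v ∩ U).Nonempty := ⟨u, ⟨le_refl u, huv.le⟩, hmemIoo i u hu⟩
  have hne2 : (Set.Icc u v ∩ V).Nonempty :=
    ⟨v, ⟨huv.le, le_refl v⟩, Set.mem_biUnion (Ne.symm hij) (hmemIoo j v hv)⟩
  obtain ⟨x, hxI, hxU, hxV⟩ := isPreconnected_Icc U V hUopen hVopen hcover hne1 hne2
  obtain ⟨k, hki, hxk⟩ := Set.mem_iUnion₂.mp hxV
  have hxX : x ∈ P.X := hXsub hxI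
  exact Set.disjoint_left.mp (P.piece_disjoint i k (Ne.symm hki))
    (hIooX i x hxU hxX) (hIooX k x hxk hxX)

/-- No atom with subsingleton `Δ`-intersection can meet three pieces: sorted case. -/
lemma not_three_sorted {B : Set ℝ} (hB : B.OrdConnected)
    (hsub : (B ∩ P.Delta).Subsingleton) {i j k : Fin P.N}
    (hij : i ≠ j) (hjk : j ≠ k) {u v w : ℝ}
    (hu : u ∈ B ∩ P.piece i) (hv : v ∈ B ∩ P.piece j) (hw : w ∈ B ∩ P.piece k)
    (huv : u < v) (hvw : v < w) : False := by
  obtain ⟨δ₁, hδ₁D, hδ₁u, hδ₁v⟩ := exists_delta_between P hij hu.2 hv.2 huv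
  obtain ⟨δ₂, hδ₂D, hδ₂v, hδ₂w⟩ := exists_delta_between P hjk hv.2 hw.2 hvw
  have hδ₁B : δ₁ ∈ B := hB.out hu.1 hv.1 ⟨hδ₁u.le, hδ₁v.le⟩
  have hδ₂B : δ₂ ∈ B := hB.out hv.1 hw.1 ⟨hδ₂v.le, hδ₂w.le⟩
  have : δ₁ = δ₂ := hsub ⟨hδ₁B, hδ₁D⟩ ⟨hδ₂B, hδ₂D⟩
  linarith

lemma not_three {B : Set ℝ} (hB : B.OrdConnected)
    (hsub : (B ∩ P.Delta).Subsingleton) {i j k : Fin P.N}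
    (hij : i ≠ j) (hjk : j ≠ k) (hik : i ≠ k) {u v w : ℝ}
    (hu : u ∈ B ∩ P.piece i) (hv : v ∈ B ∩ P.piece j) (hw : w ∈ B ∩ P.piece k) :
    False := by
  have huv : u ≠ v := fun e => Set.disjoint_left.mp (P.piece_disjoint i j hij) hu.2 (e ▸ hv.2)
  have hvw : v ≠ w := fun e => Set.disjoint_left.mp (P.piece_disjoint j k hjk) hv.2 (e ▸ hw.2)
  have huw : u ≠ w := fun e => Set.disjoint_left.mp (P.piece_disjoint i k hik) hu.2 (e ▸ hw.2)
  rcases huv.lt_or_gt with h1 | h1 <;> rcases hvw.lt_or_gt with h2 | h2 <;>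
    rcases huw.lt_or_gt with h3 | h3
  · exact not_three_sorted P hB hsub hij hjk hu hv hw h1 h2
  · linarith
  · exact not_three_sorted P hB hsub hik (Ne.symm hjk) hu hw hv h3 h2
  · exact not_three_sorted P hB hsub (Ne.symm hik) hij hw hu hv h3 h1
  · exact not_three_sorted P hB hsub (Ne.symm hij) hik hv hu hw h1 h3
  · exact not_three_sorted P hB hsub hjk (Ne.symm hik) hv hw hu h2 h3
  · linarith
  · exact not_three_sorted P hB hsub (Ne.symm hjk) (Ne.symm hij) hw hv hu h2 h1

/-- Interior boundary points. -/
def DeltaInt : Set ℝ :=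
  {δ | δ ∈ P.Delta ∧ (∃ x ∈ P.Xstar, x < δ) ∧ ∃ y ∈ P.Xstar, δ < y}

lemma exists_right_piece {δ : ℝ} (hδ : δ ∈ DeltaInt P) :
    ∃ k, δ ∈ closure (P.piece k) ∧ P.piece k ⊆ Set.Ioi δ := by
  obtain ⟨⟨hδX, hδs⟩, ⟨x, hx, hxδ⟩, ⟨y, hy, hδy⟩⟩ := hδ
  have hyX : y ∈ P.X := by
    obtain ⟨k, hk⟩ := Set.mem_iUnion.mp hy; exact piece_subset P k hk
  have hδb : δ < P.b := lt_of_lt_of_le hδy hyX.2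
  set t : ℕ → ℝ := fun m => δ + (P.b - δ) / (m + 1) with ht
  have htmem : ∀ m, t m ∈ Set.Ioc δ P.b := by
    intro m
    have hm1 : (0:ℝ) < (m:ℝ) + 1 := by exact_mod_cast Nat.succ_pos m
    have hdiv : 0 < (P.b - δ) / ((m:ℝ) + 1) := div_pos (by linarith) hm1
    have hds : (P.b - δ) / ((m:ℝ) + 1) ≤ P.b - δ := div_le_self (by linarith) (by linarith)
    simp only [ht]
    constructor <;> [linarith; linarith]
  have htX : ∀ m, t m ∈ ⋃ k, closure (P.piece k) := by
    intro m
    rw [← P.cover]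
    exact ⟨le_trans hδX.1 (htmem m).1.le, (htmem m).2⟩
  choose κ hκ using fun m => Set.mem_iUnion.mp (htX m)
  obtain ⟨k, hkinf⟩ := Finite.exists_infinite_fiber κ
  rw [Set.infinite_coe_iff] at hkinf
  have htend : ∀ ε > 0, ∃ m, κ m = k ∧ |t m - δ| < ε := by
    intro ε hε
    obtain ⟨M, hM⟩ := exists_nat_gt ((P.b - δ) / ε)
    obtain ⟨m, hm, hmM⟩ := hkinf.exists_gt M
    refine ⟨m, hm, ?_⟩
    have hm1 : (0:ℝ) < (m:ℝ) + 1 := by exact_mod_cast Nat.succ_pos m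
    have h1 : t m - δ = (P.b - δ) / ((m:ℝ) + 1) := by simp [ht]
    have hMm : ((M:ℝ)) < (m:ℝ) + 1 := by exact_mod_cast Nat.lt_succ_of_lt hmM
    have hlt : (P.b - δ) / ε < (m:ℝ) + 1 := lt_trans hM hMm
    have h2 : P.b - δ < ε * ((m:ℝ) + 1) := by
      have := (div_lt_iff₀ hε).mp hlt
      linarith [this]
    rw [h1, abs_of_pos (div_pos (by linarith) hm1), div_lt_iff₀ hm1]
    linarith
  have hδcl : δ ∈ closure (P.piece k) := by
    rw [← closure_closure (s := P.piece k)]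
    rw [_root_.mem_closure_iff]
    intro o ho hδo
    obtain ⟨ε, hε, hball⟩ := Metric.isOpen_iff.mp ho δ hδo
    obtain ⟨m, hm, hmε⟩ := htend ε hε
    exact ⟨t m, hball (by rwa [Metric.mem_ball, Real.dist_eq]), hm ▸ hκ m⟩
  refine ⟨k, hδcl, ?_⟩
  intro w hw
  simp only [Set.mem_Ioi]
  by_contra hle
  push_neg at hle
  have hwδ : w < δ := lt_of_le_of_ne hle (fun e => hδs (e ▸ Set.mem_iUnion.mpr ⟨k, hw⟩))
  obtain ⟨cc, dd, hcd⟩ := P.piece_interval k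
  obtain ⟨m0, hm0⟩ : ∃ m, κ m = k := ⟨hkinf.nonempty.choose, hkinf.nonempty.choose_spec⟩
  have htm0 : t m0 ∈ closure (P.piece k) := hm0 ▸ hκ m0
  have hwIoo : w ∈ Set.Ioo cc dd := by rw [hcd] at hw; exact hw.1
  have hsubIcc : closure (P.piece k) ⊆ Set.Icc cc dd := by
    rw [hcd]
    refine (closure_mono inter_subset_left).trans ?_
    rw [closure_Ioo (ne_of_lt (lt_trans hwIoo.1 hwIoo.2))]
  have hδk : δ ∈ P.piece k := by
    rw [hcd]
    refine ⟨⟨lt_trans hwIoo.1 hwδ, ?_⟩, hδX⟩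
    have := hsubIcc htm0
    exact lt_of_lt_of_le (htmem m0).1 this.2
  exact hδs (Set.mem_iUnion.mpr ⟨k, hδk⟩)

end PCIMAux

namespace PCIMAux
open PCIM
variable (P : PCIM)

lemma fin_pos : 0 < P.N := P.hN

lemma deltaInt_spec : (DeltaInt P).Finite ∧ (DeltaInt P).ncard ≤ P.N - 1 := by
  classical
  have haX : P.a ∈ Set.Icc P.a P.b := ⟨le_refl _, P.hab.le⟩
  have hcov := P.cover
  obtain ⟨k0, hk0⟩ : ∃ k0, P.a ∈ closure (P.piece k0) := by
    rw [hcov] at haX; exact Set.mem_iUnion.mp haX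
  haveI : Inhabited (Fin P.N) := ⟨⟨0, P.hN⟩⟩
  set ψ : ℝ → Fin P.N := fun δ =>
    if h : δ ∈ DeltaInt P then (exists_right_piece P h).choose else default with hψ
  have hspec : ∀ δ (h : δ ∈ DeltaInt P),
      δ ∈ closure (P.piece (ψ δ)) ∧ P.piece (ψ δ) ⊆ Set.Ioi δ := by
    intro δ h
    simp only [hψ, dif_pos h]
    exact (exists_right_piece P h).choose_spec
  have hinj : Set.InjOn ψ (DeltaInt P) := by
    intro δ hδ δ' hδ' he
    have h1 := hspec δ hδ
    have h2 := hspec δ' hδ'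
    have hle1 : δ' ≤ δ := by
      have : δ ∈ closure (Set.Ioi δ') := closure_mono (he ▸ h2.2) h1.1
      rwa [closure_Ioi, Set.mem_Ici] at this
    have hle2 : δ ≤ δ' := by
      have : δ' ∈ closure (Set.Ioi δ) := closure_mono (he ▸ h1.2) h2.1
      rwa [closure_Ioi, Set.mem_Ici] at this
    exact le_antisymm hle2 hle1
  have hmaps : ∀ δ ∈ DeltaInt P, ψ δ ∈ ({k0}ᶜ : Set (Fin P.N)) := by
    intro δ hδ
    simp only [Set.mem_compl_iff, Set.mem_singleton_iff]
    intro he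
    have h1 := hspec δ hδ
    have haI : P.a ∈ Set.Ici δ := by
      rw [← closure_Ioi]
      exact closure_mono h1.2 (he ▸ hk0)
    obtain ⟨⟨-, -⟩, ⟨x, hx, hxδ⟩, -⟩ := hδ
    have hxX : x ∈ P.X := by
      obtain ⟨k, hk⟩ := Set.mem_iUnion.mp hx; exact piece_subset P k hk
    have : P.a < δ := lt_of_le_of_lt hxX.1 hxδ
    exact absurd haI (by simp only [Set.mem_Ici]; linarith)
  have hcard : ({k0}ᶜ : Set (Fin P.N)).ncard = P.N - 1 := by
    have h := Set.ncard_add_ncard_compl ({k0} : Set (Fin P.N))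
    rw [Set.ncard_singleton] at h
    simp only [Nat.card_eq_fintype_card, Fintype.card_fin] at h
    omega
  have hfin : (DeltaInt P).Finite :=
    Set.Finite.of_finite_image (Set.toFinite _) hinj
  refine ⟨hfin, ?_⟩
  rw [← hcard]
  exact Set.ncard_le_ncard_of_injOn ψ hmaps hinj (Set.toFinite _)

lemma atoms_finite (n : ℕ) : (P.atoms n).Finite := by
  refine ((List.finite_length_eq (Fin P.N) n).image P.atomOf).subset ?_
  rintro A ⟨w, hw, heq, -⟩
  exact ⟨w, hw, heq⟩

lemma atoms_mem_ordConnected {n : ℕ} {A : Set ℝ} (hA : A ∈ P.atoms n) :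
    A.OrdConnected := by
  obtain ⟨w, -, rfl, -⟩ := hA; exact atom_ordConnected P w

lemma atoms_succ {n : ℕ} {A : Set ℝ} (hA : A ∈ P.atoms (n + 1)) :
    ∃ B i, B ∈ P.atoms n ∧ (B ∩ P.piece i).Nonempty ∧ A = stepF P B i := by
  obtain ⟨w, hlen, rfl, hne⟩ := hA
  rcases List.eq_nil_or_concat w with rfl | ⟨w₀, i, rfl⟩
  · simp at hlen
  · rw [List.concat_eq_append] at hlen hne ⊢
    simp only [List.length_append, List.length_singleton] at hlen
    rw [atomOf_append] at hne
    have hBi : (P.atomOf w₀ ∩ P.piece i).Nonempty := by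
      rw [stepF, closure_nonempty_iff, Set.image_nonempty] at hne
      exact hne
    refine ⟨P.atomOf w₀, i, ⟨w₀, by omega, rfl, hBi.mono Set.inter_subset_left⟩, hBi,
      atomOf_append P w₀ i⟩

lemma step_card (hsep : P.SeparationProperty) {n : ℕ}
    (hsub : ∀ A ∈ P.atoms n, (A ∩ P.Delta).Subsingleton) :
    (P.atoms (n + 1)).ncard ≤ (P.atoms n).ncard + (P.N - 1) := by
  classical
  set t : Set (Set ℝ ⊕ ℝ) := Sum.inl '' P.atoms n ∪ Sum.inr '' DeltaInt P with ht
  have htfin : t.Finite :=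
    ((atoms_finite P n).image _).union ((deltaInt_spec P).1.image _)
  haveI : Finite ↥t := htfin.to_subtype
  have hch : ∀ a : ↥(P.atoms (n + 1)), ∃ p : Set ℝ × Fin P.N,
      p.1 ∈ P.atoms n ∧ (p.1 ∩ P.piece p.2).Nonempty ∧ (a : Set ℝ) = stepF P p.1 p.2 := by
    intro a
    obtain ⟨B, i, h1, h2, h3⟩ := atoms_succ P a.2
    exact ⟨(B, i), h1, h2, h3⟩
  choose p hp1 hp2 hp3 using hch
  set T : ↥(P.atoms (n + 1)) → Finset (Fin P.N) :=
    fun a => (Set.toFinite {k | ((p a).1 ∩ P.piece k).Nonempty}).toFinset with hT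
  have hTmem : ∀ a k, k ∈ T a ↔ ((p a).1 ∩ P.piece k).Nonempty := by
    intro a k; simp [hT, Set.Finite.mem_toFinset]
  have hTne : ∀ a, (T a).Nonempty := fun a => ⟨(p a).2, (hTmem a _).mpr (hp2 a)⟩
  set i₀ : ↥(P.atoms (n + 1)) → Fin P.N := fun a => (T a).min' (hTne a) with hi₀def
  have hdelta : ∀ a, (p a).2 ≠ i₀ a → ∃ δ, δ ∈ DeltaInt P ∧ δ ∈ (p a).1 := by
    intro a hne
    have h0 : i₀ a ∈ T a := Finset.min'_mem _ _
    rw [hTmem] at h0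
    obtain ⟨u₀, hu₀⟩ := h0
    obtain ⟨u, hu⟩ := hp2 a
    have hBO : ((p a).1).OrdConnected := atoms_mem_ordConnected P (hp1 a)
    have huu : u ≠ u₀ := fun e =>
      Set.disjoint_left.mp (P.piece_disjoint _ _ hne) hu.2 (e ▸ hu₀.2)
    rcases huu.lt_or_gt with hlt | hlt
    · obtain ⟨δ, hδD, h1, h2⟩ := exists_delta_between P hne hu.2 hu₀.2 hlt
      exact ⟨δ, ⟨hδD, ⟨u, Set.mem_iUnion.mpr ⟨_, hu.2⟩, h1⟩,
        ⟨u₀, Set.mem_iUnion.mpr ⟨_, hu₀.2⟩, h2⟩⟩, hBO.out hu.1 hu₀.1 ⟨h1.le, h2.le⟩⟩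
    · obtain ⟨δ, hδD, h1, h2⟩ := exists_delta_between P (Ne.symm hne) hu₀.2 hu.2 hlt
      exact ⟨δ, ⟨hδD, ⟨u₀, Set.mem_iUnion.mpr ⟨_, hu₀.2⟩, h1⟩,
        ⟨u, Set.mem_iUnion.mpr ⟨_, hu.2⟩, h2⟩⟩, hBO.out hu₀.1 hu.1 ⟨h1.le, h2.le⟩⟩
  have hinj : ∃ g : ↥(P.atoms (n + 1)) → ↥t, Function.Injective g := by
    refine ⟨fun a => if h : (p a).2 = i₀ a then
        ⟨Sum.inl (p a).1, Set.mem_union_left _ ⟨_, hp1 a, rfl⟩⟩ else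
        ⟨Sum.inr (hdelta a h).choose,
          Set.mem_union_right _ ⟨_, (hdelta a h).choose_spec.1, rfl⟩⟩, ?_⟩
    intro a a' heq
    have hval := congrArg Subtype.val heq
    by_cases h1 : (p a).2 = i₀ a <;> by_cases h2 : (p a').2 = i₀ a'
    · simp only [dif_pos h1, dif_pos h2] at hval
      have hBB : (p a).1 = (p a').1 := Sum.inl.inj hval
      have hTT : T a = T a' := Finset.ext fun k => by rw [hTmem, hTmem, hBB]
      have hii : i₀ a = i₀ a' := le_antisymm
        (Finset.min'_le _ _ (hTT ▸ Finset.min'_mem (T a') (hTne a')))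
        (Finset.min'_le _ _ (hTT ▸ Finset.min'_mem (T a) (hTne a)))
      have : (p a).2 = (p a').2 := by rw [h1, h2, hii]
      apply Subtype.ext
      rw [hp3 a, hp3 a', hBB, this]
    · simp only [dif_pos h1, dif_neg h2] at hval
      simp at hval
    · simp only [dif_neg h1, dif_pos h2] at hval
      simp at hval
    · simp only [dif_neg h1, dif_neg h2] at hval
      have hδeq := Sum.inr.inj hval
      have hδa := (hdelta a h1).choose_spec
      have hδa' := (hdelta a' h2).choose_spec
      have hBB : (p a).1 = (p a').1 := by
        rcases atoms_eq_or_disjoint P hsep (hp1 a) (hp1 a') with h | h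
        · exact h
        · exact absurd h (Set.not_disjoint_iff.mpr ⟨_, hδa.2, hδeq ▸ hδa'.2⟩)
      have hTT : T a = T a' := Finset.ext fun k => by rw [hTmem, hTmem, hBB]
      have hii : i₀ a = i₀ a' := le_antisymm
        (Finset.min'_le _ _ (hTT ▸ Finset.min'_mem (T a') (hTne a')))
        (Finset.min'_le _ _ (hTT ▸ Finset.min'_mem (T a) (hTne a)))
      have hpp : (p a).2 = (p a').2 := by
        by_contra hne
        have h0 : i₀ a ∈ T a := Finset.min'_mem _ _
        rw [hTmem] at h0
        obtain ⟨u₀, hu₀⟩ := h0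
        obtain ⟨u, hu⟩ := hp2 a
        obtain ⟨u', hu'⟩ := hp2 a'
        rw [← hBB] at hu'
        exact not_three P (atoms_mem_ordConnected P (hp1 a)) (hsub _ (hp1 a))
          hne (fun e => h2 (e.trans hii)) h1 hu hu' hu₀
      apply Subtype.ext
      rw [hp3 a, hp3 a', hBB, hpp]
  obtain ⟨g, hg⟩ := hinj
  calc (P.atoms (n + 1)).ncard = Nat.card ↥(P.atoms (n + 1)) :=
        (Nat.card_coe_set_eq _).symm
    _ ≤ Nat.card ↥t := Nat.card_le_card_of_injective g hg
    _ = t.ncard := Nat.card_coe_set_eq _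
    _ ≤ (Sum.inl '' P.atoms n : Set (Set ℝ ⊕ ℝ)).ncard + (Sum.inr '' DeltaInt P).ncard :=
        Set.ncard_union_le _ _
    _ = (P.atoms n).ncard + (DeltaInt P).ncard := by
        rw [Set.ncard_image_of_injective _ Sum.inl_injective,
          Set.ncard_image_of_injective _ Sum.inr_injective]
    _ ≤ (P.atoms n).ncard + (P.N - 1) := by
        have := (deltaInt_spec P).2; omega

end PCIMAux


/-- Under the separation property and `D ⊆ X̃`, if every atom of
generation at least `n₀` contains at most one point of `Δ`, then
`#𝒜_{n+n₀} - #𝒜_{n₀} ≤ n (N - 1)` for every `n ≥ 1`. -/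
theorem card_atoms_growth (P : PCIM)
    (hsep : P.SeparationProperty) (hD : P.D ⊆ P.Xtilde)
    (n₀ : ℕ) (hn₀ : 1 ≤ n₀)
    (hatom : ∀ n : ℕ, n₀ ≤ n → ∀ A ∈ P.atoms n, (A ∩ P.Delta).Subsingleton) :
    ∀ n : ℕ, 1 ≤ n →
      (P.atoms (n + n₀)).ncard - (P.atoms n₀).ncard ≤ n * (P.N - 1) := by
  have main : ∀ m : ℕ, (P.atoms (n₀ + m)).ncard ≤ (P.atoms n₀).ncard + m * (P.N - 1) := by
    intro m
    induction m with
    | zero => simp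
    | succ m ih =>
      have hstep := PCIMAux.step_card P hsep (n := n₀ + m)
        (fun A hA => hatom (n₀ + m) (Nat.le_add_right _ _) A hA)
      rw [show n₀ + (m + 1) = (n₀ + m) + 1 from by omega]
      calc (P.atoms ((n₀ + m) + 1)).ncard ≤ (P.atoms (n₀ + m)).ncard + (P.N - 1) := hstep
        _ ≤ ((P.atoms n₀).ncard + m * (P.N - 1)) + (P.N - 1) := by omega
        _ = (P.atoms n₀).ncard + (m + 1) * (P.N - 1) := by ring
  intro n hn
  have h := main n
  rw [show n + n₀ = n₀ + n from Nat.add_comm _ _]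
  set x := (P.atoms (n₀ + n)).ncard
  set y := (P.atoms n₀).ncard
  set K := n * (P.N - 1)
  omega
end
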